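/- Let f : ℝⁿ → ℝ be C¹ and satisfy, on a neighborhood of a local minimum x̄ with minimum value f*, the Polyak–Łojasiewicz inequality f(x) - f* ≤ (1/(2μ))‖∇f(x)‖² for some μ > 0. Then f satisfies quadratic growth with the same constant near x̄: f(x) - f* ≥ (μ/2) dist(x, S)² for all x sufficiently close to x̄, where S is the set of local minima with value f*. -/

import Mathlib

open Metric Filter Topology

set_option maxHeartbeats 1000000

/-- PL implies quadratic growth with the same constant, for C¹ functions. -/
theorem pl_implies_qg {n : ℕ}
    (f : EuclideanSpace ℝ (Fin n) → ℝ) (xb : EuclideanSpace ℝ (Fin n))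
    (hf : ContDiff ℝ 1 f) (hmin : IsLocalMin f xb)
    (μ : ℝ) (hμ : 0 < μ)
    (hPL : ∀ᶠ x in 𝓝 xb, f x - f xb ≤ (1 / (2 * μ)) * ‖gradient f x‖ ^ 2) :
    ∀ᶠ x in 𝓝 xb,
      (μ / 2) * (Metric.infDist x {y | IsLocalMin f y ∧ f y = f xb}) ^ 2 ≤ f x - f xb := by
  set c := f xb with hc
  set S : Set (EuclideanSpace ℝ (Fin n)) := {y | IsLocalMin f y ∧ f y = c} with hS
  -- choose r > 0 so that PL and f ≥ c hold on closedBall xb r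
  obtain ⟨r', hr', hball⟩ := Metric.eventually_nhds_iff.mp (hPL.and hmin)
  set r := r' / 2 with hrdef
  have hr : 0 < r := by positivity
  have hK : ∀ z ∈ closedBall xb r, (f z - c ≤ (1 / (2 * μ)) * ‖gradient f z‖ ^ 2 ∧ c ≤ f z) := by
    intro z hz
    have : dist z xb < r' := lt_of_le_of_lt (mem_closedBall.mp hz) (by linarith)
    exact ⟨(hball this).1, (hball this).2⟩
  set h : EuclideanSpace ℝ (Fin n) → ℝ := fun z => Real.sqrt (f z - c) with hh
  have hcont : Continuous h := Real.continuous_sqrt.comp ((hf.continuous).sub continuous_const)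
  set a := Real.sqrt (μ / 2) with ha
  have ha0 : 0 < a := Real.sqrt_pos.mpr (by positivity)
  have ha2 : a ^ 2 = μ / 2 := Real.sq_sqrt (by positivity)
  -- key: for x in good region and a/2 ≤ ε with ε² < μ/2, ε² · infDist² ≤ f x - c
  have key : ∀ x, dist x xb < r / 2 → h x < (a / 2) * (r / 2) →
      ∀ ε, a / 2 ≤ ε → ε ^ 2 < μ / 2 → ε ^ 2 * (infDist x S) ^ 2 ≤ f x - c := by
    intro x hx1 hx2 ε hε1 hε2
    have hε0 : 0 < ε := lt_of_lt_of_le (by positivity) hε1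
    have hxK : x ∈ closedBall xb r := mem_closedBall.mpr (by linarith [hx1])
    -- minimize φ on the compact ball
    set φ : EuclideanSpace ℝ (Fin n) → ℝ := fun z => h z + ε * dist z x with hφ
    have hφc : Continuous φ := hcont.add (continuous_const.mul (continuous_id.dist continuous_const))
    obtain ⟨y, hyK, hymin⟩ := (isCompact_closedBall xb r).exists_isMinOn
      ⟨xb, mem_closedBall_self hr.le⟩ hφc.continuousOn
    have hyx : ε * dist y x ≤ h x := by
      have h1 : φ y ≤ φ x := hymin hxK
      simp only [hφ, dist_self, mul_zero, add_zero] at h1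
      have h0 : 0 ≤ h y := Real.sqrt_nonneg _
      linarith [h1]
    have hyball : dist y xb < r := by
      have h1 : dist y x < r / 2 := by
        by_contra hcon
        push_neg at hcon
        have : (a / 2) * (r / 2) ≤ ε * dist y x := by
          have := mul_le_mul hε1 hcon (by positivity) hε0.le
          linarith
        linarith
      calc dist y xb ≤ dist y x + dist x xb := dist_triangle _ _ _
        _ < r := by linarith
    have hKnbhd : closedBall xb r ∈ 𝓝 y :=
      Filter.mem_of_superset (isOpen_ball.mem_nhds (mem_ball.mpr hyball)) ball_subset_closedBall
    -- claim: f y = c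
    have hfy : f y = c := by
      by_contra hne
      have hs : 0 < f y - c := lt_of_le_of_ne (by linarith [(hK y hyK).2]) (by
        intro hcon; exact hne (by linarith))
      set s := f y - c with hsdef
      have hsne : s ≠ 0 := ne_of_gt hs
      clear_value s
      set F := fderiv ℝ f y with hF
      have hFd : HasFDerivAt f F y := ((hf.differentiable one_ne_zero) y).hasFDerivAt
      have hsub : HasFDerivAt (fun z => f z - c) F y := hFd.sub_const c
      have hsqrt : HasDerivAt Real.sqrt (1 / (2 * Real.sqrt s)) s := Real.hasDerivAt_sqrt hsne
      have hL : HasFDerivAt h ((1 / (2 * Real.sqrt s)) • F) y := by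
        have hsqrt' : HasDerivAt Real.sqrt (1 / (2 * Real.sqrt s)) (f y - c) := hsdef ▸ hsqrt
        exact hsqrt'.comp_hasFDerivAt y hsub
      set L := (1 / (2 * Real.sqrt s)) • F with hLdef
      -- local min of φ at y
      have hlocmin : IsLocalMin φ y := hymin.isLocalMin hKnbhd
      -- directional derivative bound: ∀ v, -(ε‖v‖) ≤ L v
      have hdir : ∀ v : EuclideanSpace ℝ (Fin n), -(ε * ‖v‖) ≤ L v := by
        intro v
        have hcurve : HasDerivAt (fun t : ℝ => y + t • v) v 0 := by
          simpa using ((hasDerivAt_id (0 : ℝ)).smul_const v).const_add y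
        have hψ : HasDerivAt (fun t : ℝ => h (y + t • v)) (L v) 0 := by
          have hL' : HasFDerivAt h L (y + (0:ℝ) • v) := by rw [zero_smul, add_zero]; exact hL
          have := hL'.comp_hasDerivAt 0 hcurve
          exact this
        have hslope := hasDerivAt_iff_tendsto_slope.mp hψ
        have hslope' : Tendsto (slope (fun t : ℝ => h (y + t • v)) 0) (𝓝[>] 0) (𝓝 (L v)) :=
          hslope.mono_left (nhdsWithin_mono 0 (fun t ht => ne_of_gt ht))
        refine ge_of_tendsto hslope' ?_
        -- eventually for t > 0 small, slope ≥ -(ε‖v‖)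
        have hnear : ∀ᶠ t : ℝ in 𝓝 0, φ y ≤ φ (y + t • v) := by
          have hc : Continuous (fun t : ℝ => y + t • v) := by continuity
          have : Tendsto (fun t : ℝ => y + t • v) (𝓝 0) (𝓝 y) := by
            have := hc.tendsto 0
            simpa using this
          exact this.eventually hlocmin
        rw [eventually_nhdsWithin_iff]
        filter_upwards [hnear] with t ht htpos
        have htpos : (0:ℝ) < t := htpos
        have hdist : dist (y + t • v) x ≤ dist y x + t * ‖v‖ := by
          calc dist (y + t • v) x ≤ dist (y + t • v) y + dist y x := dist_triangle _ _ _
            _ = ‖t • v‖ + dist y x := by rw [dist_eq_norm, add_sub_cancel_left]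
            _ = t * ‖v‖ + dist y x := by rw [norm_smul, Real.norm_eq_abs, abs_of_pos htpos]
            _ = dist y x + t * ‖v‖ := by ring
        have hφy : h y + ε * dist y x ≤ h (y + t • v) + ε * dist (y + t • v) x := by
          have h1 := ht
          simp only [hφ] at h1
          exact h1
        have hφt : h y + ε * dist y x ≤ h (y + t • v) + ε * (dist y x + t * ‖v‖) := by
          have h2 := mul_le_mul_of_nonneg_left hdist hε0.le
          linarith
        have hineq : -(ε * ‖v‖) * t ≤ h (y + t • v) - h y := by nlinarith
        have hseq : slope (fun t : ℝ => h (y + t • v)) 0 t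
            = (h (y + t • v) - h y) / t := by
          rw [slope_def_field]
          simp
        rw [hseq, le_div_iff₀ htpos]
        linarith [hineq]
      -- operator norm bound ‖L‖ ≤ ε
      have hLnorm : ‖L‖ ≤ ε := by
        refine ContinuousLinearMap.opNorm_le_bound L hε0.le (fun v => ?_)
        have h1 := hdir v
        have h2 := hdir (-v)
        rw [map_neg, norm_neg] at h2
        rw [Real.norm_eq_abs, abs_le]
        constructor <;> linarith
      -- compute ‖L‖ and derive contradiction with PL
      have hsq : Real.sqrt s > 0 := Real.sqrt_pos.mpr hs
      have hLval : ‖L‖ = (1 / (2 * Real.sqrt s)) * ‖F‖ := by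
        rw [hLdef, norm_smul, Real.norm_eq_abs, abs_of_pos (by positivity)]
      have hgrad : ‖gradient f y‖ = ‖F‖ := by simp [gradient, hF]
      have hPLy : s ≤ (1 / (2 * μ)) * ‖F‖ ^ 2 := by
        have := (hK y hyK).1
        rw [hsdef]
        rwa [hgrad] at this
      have hFle : ‖F‖ ≤ 2 * Real.sqrt s * ε := by
        rw [hLval] at hLnorm
        rw [div_mul_eq_mul_div, one_mul, div_le_iff₀ (by positivity)] at hLnorm
        linarith [hLnorm]
      have hss : Real.sqrt s ^ 2 = s := Real.sq_sqrt hs.le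
      have hF2 : ‖F‖ ^ 2 ≤ 4 * s * ε ^ 2 := by
        have := pow_le_pow_left₀ (norm_nonneg F) hFle 2
        nlinarith [this, hss]
      have h2 : 2 * μ * s ≤ ‖F‖ ^ 2 := by
        have h3 := mul_le_mul_of_nonneg_left hPLy (by positivity : (0:ℝ) ≤ 2 * μ)
        have h4 : (2 * μ) * (1 / (2 * μ) * ‖F‖ ^ 2) = ‖F‖ ^ 2 := by field_simp
        linarith [h3, h4.le, h4.ge]
      have h5 : 4 * s * ε ^ 2 < 4 * s * (μ / 2) := by
        exact mul_lt_mul_of_pos_left hε2 (by positivity)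
      linarith [hF2, h2, h5]
    -- so y ∈ S
    have hyS : y ∈ S := by
      refine ⟨?_, hfy⟩
      have : ∀ᶠ z in 𝓝 y, f y ≤ f z := by
        filter_upwards [hKnbhd] with z hz
        rw [hfy]; exact (hK z hz).2
      exact this
    -- conclude
    have hD : infDist x S ≤ dist x y := infDist_le_dist_of_mem hyS
    have hD0 : 0 ≤ infDist x S := infDist_nonneg
    have h1 : ε * infDist x S ≤ h x := by
      calc ε * infDist x S ≤ ε * dist x y := by
            exact mul_le_mul_of_nonneg_left hD hε0.le
        _ = ε * dist y x := by rw [dist_comm]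
        _ ≤ h x := hyx
    have hfx : c ≤ f x := (hK x hxK).2
    have h2 : h x ^ 2 = f x - c := Real.sq_sqrt (by linarith)
    nlinarith [h1, mul_nonneg hε0.le hD0]
  -- turn into eventual statement
  have hU : {x | dist x xb < r / 2 ∧ h x < (a / 2) * (r / 2)} ∈ 𝓝 xb := by
    have ho : IsOpen {x | dist x xb < r / 2 ∧ h x < (a / 2) * (r / 2)} := by
      apply IsOpen.inter
      · exact isOpen_lt (continuous_id.dist continuous_const) continuous_const
      · exact isOpen_lt hcont continuous_const
    refine ho.mem_nhds ⟨by simpa using by positivity, ?_⟩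
    simp only [Set.mem_setOf_eq, hh]
    rw [hc, sub_self, Real.sqrt_zero]
    positivity
  filter_upwards [hU] with x hx
  obtain ⟨hx1, hx2⟩ := hx
  -- take the limit ε → a⁻
  set D := infDist x S with hD
  have htend : Tendsto (fun ε : ℝ => ε ^ 2 * D ^ 2) (𝓝[<] a) (𝓝 (a ^ 2 * D ^ 2)) := by
    have : ContinuousAt (fun ε : ℝ => ε ^ 2 * D ^ 2) a := by fun_prop
    exact this.continuousWithinAt.tendsto
  have hev : ∀ᶠ ε in 𝓝[<] a, ε ^ 2 * D ^ 2 ≤ f x - c := by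
    have hIoo : Set.Ioo (a / 2) a ∈ 𝓝[<] a := Ioo_mem_nhdsLT_of_mem ⟨by linarith, le_rfl⟩
    filter_upwards [hIoo] with ε hε
    have hε2 : ε ^ 2 < μ / 2 := by
      have h0 : 0 < ε := lt_trans (by positivity) hε.1
      calc ε ^ 2 < a ^ 2 := by nlinarith [hε.2]
        _ = μ / 2 := ha2
    exact key x hx1 hx2 ε hε.1.le hε2
  have := le_of_tendsto htend hev
  rwa [ha2] at this
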